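/- (Prime-Projectivity Lemma) Let L be a finite lattice and let p and q be distinct prime intervals in L. Then q is collapsed by con(p) if and only if p is prime-projective to q, i.e., there exists a sequence of pairwise distinct prime intervals p = r_0, r_1, ..., r_n = q with r_i prime-perspective to r_{i+1} for each i. -/
import Mathlib


universe u

/-- A congruence of a lattice: an equivalence relation compatible with `⊔` and `⊓`. -/
structure LatCon (L : Type u) [Lattice L] : Type u where
  rel : L → L → Prop
  refl : ∀ a, rel a a
  symm : ∀ {a b}, rel a b → rel b a
  trans : ∀ {a b c}, rel a b → rel b c → rel a c
  sup_comp : ∀ {a b c d}, rel a b → rel c d → rel (a ⊔ c) (b ⊔ d)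
  inf_comp : ∀ {a b c d}, rel a b → rel c d → rel (a ⊓ c) (b ⊓ d)

variable {L : Type u} [Lattice L]

/-- The inclusion order on congruences. -/
def LatCon.le (α β : LatCon L) : Prop := ∀ a b : L, α.rel a b → β.rel a b

/-- The principal congruence `con(x, y)`: the smallest congruence collapsing `x` and `y`. -/
def conOf (x y : L) : LatCon L where
  rel a b := ∀ θ : LatCon L, θ.rel x y → θ.rel a b
  refl a := fun θ _ => θ.refl a
  symm h := fun θ hθ => θ.symm (h θ hθ)
  trans h₁ h₂ := fun θ hθ => θ.trans (h₁ θ hθ) (h₂ θ hθ)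
  sup_comp h₁ h₂ := fun θ hθ => θ.sup_comp (h₁ θ hθ) (h₂ θ hθ)
  inf_comp h₁ h₂ := fun θ hθ => θ.inf_comp (h₁ θ hθ) (h₂ θ hθ)

/-- The bottom congruence: equality. -/
def conBot : LatCon L where
  rel a b := a = b
  refl _ := rfl
  symm h := h.symm
  trans h₁ h₂ := h₁.trans h₂
  sup_comp h₁ h₂ := by rw [h₁, h₂]
  inf_comp h₁ h₂ := by rw [h₁, h₂]

/-- The join of two congruences: the smallest congruence containing both. -/
def conJoin (α β : LatCon L) : LatCon L where
  rel a b := ∀ θ : LatCon L, α.le θ → β.le θ → θ.rel a b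
  refl a := fun θ _ _ => θ.refl a
  symm h := fun θ hα hβ => θ.symm (h θ hα hβ)
  trans h₁ h₂ := fun θ hα hβ => θ.trans (h₁ θ hα hβ) (h₂ θ hα hβ)
  sup_comp h₁ h₂ := fun θ hα hβ => θ.sup_comp (h₁ θ hα hβ) (h₂ θ hα hβ)
  inf_comp h₁ h₂ := fun θ hα hβ => θ.inf_comp (h₁ θ hα hβ) (h₂ θ hα hβ)

/-- A congruence is join-irreducible if it is not the bottom congruence and is not
the join of two congruences unless it equals one of them. -/
def LatCon.JoinIrreducible (θ : LatCon L) : Prop :=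
  θ ≠ conBot ∧ ∀ α β : LatCon L, θ = conJoin α β → θ = α ∨ θ = β

/-- `p` is a prime interval: its bottom is covered by its top. -/
def IsPrimeInt (p : L × L) : Prop := p.1 ⋖ p.2

/-- `[a, b]` is perspective up to `[c, d]`: `b ⊔ c = d` and `a = b ⊓ c`. -/
def PerspUp (p q : L × L) : Prop := p.2 ⊔ q.1 = q.2 ∧ p.1 = p.2 ⊓ q.1

/-- `[a, b]` is perspective down to `[c, d]`: `a ⊓ d = c` and `a ⊔ d = b`. -/
def PerspDn (p q : L × L) : Prop := p.1 ⊓ q.2 = q.1 ∧ p.1 ⊔ q.2 = p.2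

/-- Perspectivity: up or down. -/
def Persp (p q : L × L) : Prop := PerspUp p q ∨ PerspDn p q

/-- `p` is prime-perspective down to `q`: `1_q ≤ 1_p`, `p` is perspective down onto the
interval `[0_p ⊓ 1_q, 1_q]` (i.e. `0_p ⊔ 1_q = 1_p`), and `q ⊆ [0_p ⊓ 1_q, 1_q]`
(i.e. `0_p ⊓ 1_q ≤ 0_q`). -/
def PPerspDn (p q : L × L) : Prop := q.2 ≤ p.2 ∧ p.1 ⊔ q.2 = p.2 ∧ p.1 ⊓ q.2 ≤ q.1

/-- `p` is prime-perspective up to `q`: the dual of `PPerspDn`. -/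
def PPerspUp (p q : L × L) : Prop := p.1 ≤ q.1 ∧ p.2 ⊓ q.1 = p.1 ∧ q.2 ≤ p.2 ⊔ q.1

/-- Prime-perspectivity: up or down. -/
def PPersp (p q : L × L) : Prop := PPerspUp p q ∨ PPerspDn p q

/-- Prime-projectivity: the reflexive-transitive extension of prime-perspectivity. -/
def PProj : (L × L) → (L × L) → Prop := Relation.ReflTransGen PPersp

/-- `q` is collapsed by `con(p)`. -/
def Collapses (p q : L × L) : Prop := (conOf p.1 p.2).rel q.1 q.2

/-! ### Auxiliary machinery for the proof -/

/-- One prime-perspectivity step between prime intervals. -/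
def PStep (r s : L × L) : Prop := IsPrimeInt r ∧ IsPrimeInt s ∧ PPersp r s

/-- A covering step `x ⋖ y` whose prime interval is reachable from `p`. -/
def GoodStep (p : L × L) (x y : L) : Prop :=
  x ⋖ y ∧ Relation.ReflTransGen PStep p (x, y)

/-- `y` is reachable from `x` by a chain of good covering steps. -/
def Good (p : L × L) (x y : L) : Prop := Relation.ReflTransGen (GoodStep p) x y

theorem Good.le {p : L × L} {x y : L} (h : Good p x y) : x ≤ y := by
  induction h with
  | refl => exact le_rfl
  | tail _ hbc ih => exact ih.trans hbc.1.le

/-- In a finite lattice, any interval all of whose coverings satisfy `G`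
carries a good covering chain. -/
theorem exists_cov_chain [Fintype L] (G : L → L → Prop) (t : L) :
    ∀ s : L, s ≤ t → (∀ w w', s ≤ w → w ⋖ w' → w' ≤ t → G w w') →
      Relation.ReflTransGen (fun a b => a ⋖ b ∧ G a b) s t := by
  have wf : WellFounded ((· > ·) : L → L → Prop) := wellFounded_gt
  intro s
  induction s using WellFounded.induction wf with
  | _ s ih =>
    intro hst hG
    rcases eq_or_lt_of_le hst with rfl | hlt
    · exact Relation.ReflTransGen.refl
    · have hne : ({z : L | s < z ∧ z ≤ t}).Nonempty := ⟨t, hlt, le_rfl⟩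
      obtain ⟨z, ⟨hsz, hzt⟩, hmin⟩ :=
        (wellFounded_lt (α := L)).has_min {z : L | s < z ∧ z ≤ t} hne
      have hcov : s ⋖ z := by
        refine ⟨hsz, fun c hsc hcz => ?_⟩
        exact hmin c ⟨hsc, hcz.le.trans hzt⟩ hcz
      refine Relation.ReflTransGen.head ⟨hcov, hG s z le_rfl hcov hzt⟩ ?_
      exact ih z hsz hzt (fun w w' hzw => hG w w' (hsz.le.trans hzw))

theorem good_sup [Fintype L] {p : L × L} (d : L) {x y : L} (h : Good p x y) :
    Good p (x ⊔ d) (y ⊔ d) := by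
  induction h with
  | refl => exact Relation.ReflTransGen.refl
  | @tail b v hxb hstep ih =>
    obtain ⟨hcov, hproj⟩ := hstep
    refine ih.trans ?_
    refine exists_cov_chain
      (G := fun w w' => Relation.ReflTransGen PStep p (w, w')) (v ⊔ d) (b ⊔ d)
      (sup_le_sup_right hcov.le d) ?_
    intro w w' hbw hww' hwv
    refine hproj.tail ⟨hcov, hww', Or.inl ?_⟩
    have hdw : d ≤ w := le_sup_right.trans hbw
    have hbw' : b ≤ w := le_sup_left.trans hbw
    refine ⟨hbw', ?_, ?_⟩
    · rcases hcov.eq_or_eq (c := v ⊓ w) (le_inf hcov.le hbw') inf_le_left with h1 | h1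
      · exact h1
      · exfalso
        have hvw : v ≤ w := h1 ▸ inf_le_right
        have : w' ≤ w := hwv.trans (sup_le hvw hdw)
        exact absurd (this.trans_lt' hww'.lt) (lt_irrefl _)
    · exact hwv.trans (sup_le_sup_left hdw v)

theorem good_inf [Fintype L] {p : L × L} (d : L) {x y : L} (h : Good p x y) :
    Good p (x ⊓ d) (y ⊓ d) := by
  induction h with
  | refl => exact Relation.ReflTransGen.refl
  | @tail b v hxb hstep ih =>
    obtain ⟨hcov, hproj⟩ := hstep
    refine ih.trans ?_
    refine exists_cov_chain
      (G := fun w w' => Relation.ReflTransGen PStep p (w, w')) (v ⊓ d) (b ⊓ d)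
      (inf_le_inf_right d hcov.le) ?_
    intro w w' hbw hww' hwv
    refine hproj.tail ⟨hcov, hww', Or.inr ?_⟩
    have hwd : w' ≤ d := hwv.trans inf_le_right
    refine ⟨hwv.trans inf_le_left, ?_, ?_⟩
    · rcases hcov.eq_or_eq (c := b ⊔ w') le_sup_left
        (sup_le hcov.le (hwv.trans inf_le_left)) with h1 | h1
      · exfalso
        have hw'b : w' ≤ b := le_sup_right.trans h1.le
        have : w' ≤ w := (le_inf hw'b hwd).trans hbw
        exact absurd (this.trans_lt' hww'.lt) (lt_irrefl _)
      · exact h1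
    · exact (inf_le_inf_left b hwd).trans hbw

theorem good_mono [Fintype L] {p : L × L} {x y a b : L} (h : Good p x y)
    (hxa : x ≤ a) (hab : a ≤ b) (hby : b ≤ y) : Good p a b := by
  have h1 := good_sup a h
  rw [sup_eq_right.mpr hxa, sup_eq_left.mpr (hab.trans hby)] at h1
  have h2 := good_inf b h1
  rw [inf_eq_left.mpr hab, inf_eq_right.mpr hby] at h2
  exact h2

theorem good_trans [Fintype L] {p : L × L} {a b c : L}
    (h₁ : Good p (a ⊓ b) (a ⊔ b)) (h₂ : Good p (b ⊓ c) (b ⊔ c)) :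
    Good p (a ⊓ c) (a ⊔ c) := by
  have hA : Good p (a ⊓ b ⊓ c) (b ⊓ c) := by
    have h := good_inf (b ⊓ c) h₁
    have e1 : a ⊓ b ⊓ (b ⊓ c) = a ⊓ b ⊓ c := by
      apply le_antisymm
      · exact le_inf (le_inf (inf_le_left.trans inf_le_left) (inf_le_left.trans inf_le_right))
          (inf_le_right.trans inf_le_right)
      · exact le_inf inf_le_left (le_inf (inf_le_left.trans inf_le_right) inf_le_right)
    have e2 : (a ⊔ b) ⊓ (b ⊓ c) = b ⊓ c := inf_eq_right.mpr (inf_le_left.trans le_sup_right)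
    rw [e1, e2] at h
    exact h
  have hB : Good p (b ⊔ c) (a ⊔ b ⊔ c) := by
    have h := good_sup (b ⊔ c) h₁
    have e1 : a ⊓ b ⊔ (b ⊔ c) = b ⊔ c := sup_eq_right.mpr (inf_le_right.trans le_sup_left)
    have e2 : a ⊔ b ⊔ (b ⊔ c) = a ⊔ b ⊔ c := by
      rw [sup_assoc, sup_left_idem, ← sup_assoc]
    rw [e1, e2] at h
    exact h
  have hAll : Good p (a ⊓ b ⊓ c) (a ⊔ b ⊔ c) := (hA.trans h₂).trans hB
  exact good_mono hAll
    (inf_le_inf_right c inf_le_left)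
    (inf_le_sup)
    (sup_le_sup_right le_sup_left c)

/-- The relation `a ~ b` iff `[a ⊓ b, a ⊔ b]` has a good covering chain,
assembled into a congruence. -/
def goodCon [Fintype L] (p : L × L) : LatCon L where
  rel a b := Good p (a ⊓ b) (a ⊔ b)
  refl a := by
    show Good p (a ⊓ a) (a ⊔ a)
    rw [inf_idem, sup_idem]
    exact Relation.ReflTransGen.refl
  symm {a b} h := by
    show Good p (b ⊓ a) (b ⊔ a)
    have h' : Good p (a ⊓ b) (a ⊔ b) := h
    rwa [inf_comm, sup_comm] at h'
  trans h₁ h₂ := good_trans h₁ h₂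
  sup_comp := by
    intro a b c d h₁ h₂
    have key : ∀ u v e : L, Good p (u ⊓ v) (u ⊔ v) →
        Good p ((u ⊔ e) ⊓ (v ⊔ e)) ((u ⊔ e) ⊔ (v ⊔ e)) := by
      intro u v e h
      have h' := good_sup e h
      exact good_mono h'
        (le_inf (sup_le_sup_right inf_le_left e) (sup_le_sup_right inf_le_right e))
        inf_le_sup
        (sup_le (sup_le_sup_right le_sup_left e) (sup_le_sup_right le_sup_right e))
    have s₁ : Good p ((a ⊔ c) ⊓ (b ⊔ c)) ((a ⊔ c) ⊔ (b ⊔ c)) := key a b c h₁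
    have s₂ : Good p ((c ⊔ b) ⊓ (d ⊔ b)) ((c ⊔ b) ⊔ (d ⊔ b)) := key c d b h₂
    have s₂' : Good p ((b ⊔ c) ⊓ (b ⊔ d)) ((b ⊔ c) ⊔ (b ⊔ d)) := by
      rwa [sup_comm c b, sup_comm d b] at s₂
    exact good_trans s₁ s₂'
  inf_comp := by
    intro a b c d h₁ h₂
    have key : ∀ u v e : L, Good p (u ⊓ v) (u ⊔ v) →
        Good p ((u ⊓ e) ⊓ (v ⊓ e)) ((u ⊓ e) ⊔ (v ⊓ e)) := by
      intro u v e h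
      have h' := good_inf e h
      exact good_mono h'
        (le_inf (inf_le_inf_right e inf_le_left) (inf_le_inf_right e inf_le_right))
        inf_le_sup
        (sup_le (inf_le_inf_right e le_sup_left) (inf_le_inf_right e le_sup_right))
    have s₁ : Good p ((a ⊓ c) ⊓ (b ⊓ c)) ((a ⊓ c) ⊔ (b ⊓ c)) := key a b c h₁
    have s₂ : Good p ((c ⊓ b) ⊓ (d ⊓ b)) ((c ⊓ b) ⊔ (d ⊓ b)) := key c d b h₂
    have s₂' : Good p ((b ⊓ c) ⊓ (b ⊓ d)) ((b ⊓ c) ⊔ (b ⊓ d)) := by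
      rwa [inf_comm c b, inf_comm d b] at s₂
    exact good_trans s₁ s₂'

/-- A single prime-perspectivity is preserved by any congruence collapsing the source. -/
theorem collapse_step {θ : LatCon L} {r s : L × L} (hθ : θ.rel r.1 r.2)
    (hs : IsPrimeInt s) (hrs : PPersp r s) : θ.rel s.1 s.2 := by
  rcases hrs with ⟨h1, h2, h3⟩ | ⟨h1, h2, h3⟩
  · -- up
    have t1 : θ.rel (r.1 ⊔ s.1) (r.2 ⊔ s.1) := θ.sup_comp hθ (θ.refl s.1)
    rw [sup_eq_right.mpr h1] at t1
    have t2 : θ.rel (s.1 ⊓ s.2) ((r.2 ⊔ s.1) ⊓ s.2) := θ.inf_comp t1 (θ.refl s.2)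
    rwa [inf_eq_left.mpr hs.le, inf_eq_right.mpr h3] at t2
  · -- down
    have t1 : θ.rel (r.1 ⊓ s.2) (r.2 ⊓ s.2) := θ.inf_comp hθ (θ.refl s.2)
    rw [inf_eq_right.mpr h1] at t1
    have t2 : θ.rel ((r.1 ⊓ s.2) ⊔ s.1) (s.2 ⊔ s.1) := θ.sup_comp t1 (θ.refl s.1)
    rwa [sup_eq_right.mpr h3, sup_eq_left.mpr hs.le] at t2

/-- Chains as `ℕ`-indexed families. -/
def NChain (p q : L × L) (n : ℕ) (f : ℕ → L × L) : Prop :=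
  f 0 = p ∧ f n = q ∧ (∀ i ≤ n, IsPrimeInt (f i)) ∧ ∀ i < n, PPersp (f i) (f (i + 1))

theorem nchain_of_reach {p q : L × L} (hp : IsPrimeInt p)
    (h : Relation.ReflTransGen PStep p q) : ∃ n f, NChain p q n f := by
  induction h with
  | refl => exact ⟨0, fun _ => p, rfl, rfl, fun _ _ => hp, fun i hi => absurd hi (by omega)⟩
  | @tail b c hab hbc ih =>
    obtain ⟨n, f, h0, hn, hpr, hst⟩ := ih
    refine ⟨n + 1, fun i => if i ≤ n then f i else c, by simpa using h0, by simp, ?_, ?_⟩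
    · intro i hi
      by_cases h : i ≤ n
      · simpa [h] using hpr i h
      · simpa [h] using hbc.2.1
    · intro i hi
      by_cases h : i + 1 ≤ n
      · have : i ≤ n := by omega
        simpa [h, this] using hst i (by omega)
      · have hin : i = n := by omega
        subst hin
        simp only [le_refl, if_pos, if_neg h]
        rw [hn]
        exact hbc.2.2

theorem nchain_inj {p q : L × L} :
    ∀ n, ∀ f : ℕ → L × L, NChain p q n f →
      ∃ m g, NChain p q m g ∧ ∀ i j, i ≤ m → j ≤ m → g i = g j → i = j := by
  intro n
  induction n using Nat.strong_induction_on with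
  | _ n ih =>
    intro f hf
    by_cases hinj : ∀ i j, i ≤ n → j ≤ n → f i = f j → i = j
    · exact ⟨n, f, hf, hinj⟩
    · push_neg at hinj
      obtain ⟨i, j, hi, hj, hfij, hij⟩ := hinj
      -- wlog i < j
      obtain ⟨i, j, hij, hj, hfij⟩ :
          ∃ i j : ℕ, i < j ∧ j ≤ n ∧ f i = f j := by
        rcases lt_or_gt_of_ne hij with h | h
        · exact ⟨i, j, h, hj, hfij⟩
        · exact ⟨j, i, h, hi, hfij.symm⟩
      obtain ⟨h0, hn, hpr, hst⟩ := hf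
      set m := n - (j - i) with hm
      have hmn : m < n := by omega
      have him : i ≤ m := by omega
      refine ih m hmn (fun k => if k ≤ i then f k else f (k + (j - i))) ⟨?_, ?_, ?_, ?_⟩
      · simpa using h0
      · show (if m ≤ i then f m else f (m + (j - i))) = q
        by_cases h : m ≤ i
        · have h1 : m = i := by omega
          have h2 : j = n := by omega
          rw [if_pos h, h1, hfij, h2, hn]
        · rw [if_neg h, (by omega : m + (j - i) = n), hn]
      · intro k hk
        by_cases h : k ≤ i
        · simpa [h] using hpr k (by omega)
        · simpa [h] using hpr (k + (j - i)) (by omega)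
      · intro k hk
        show PPersp (if k ≤ i then f k else f (k + (j - i)))
          (if k + 1 ≤ i then f (k + 1) else f (k + 1 + (j - i)))
        by_cases h1 : k + 1 ≤ i
        · have h2 : k ≤ i := by omega
          simpa [h1, h2] using hst k (by omega)
        · by_cases h2 : k ≤ i
          · have hki : k = i := by omega
            have e2 : f k = f j := by rw [hki, hfij]
            rw [if_pos h2, if_neg h1, e2, (by omega : k + 1 + (j - i) = j + 1)]
            exact hst j (by omega)
          · have h3 : ¬ (k + 1 ≤ i) := by omega
            rw [if_neg h2, if_neg h3, (by omega : k + 1 + (j - i) = k + (j - i) + 1)]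
            exact hst (k + (j - i)) (by omega)

theorem prime_projectivity_lemma [Fintype L] (p q : L × L) (hp : IsPrimeInt p)
    (hq : IsPrimeInt q) (hne : p ≠ q) :
    Collapses p q ↔
      ∃ (n : ℕ) (r : Fin (n + 1) → L × L), Function.Injective r ∧
        (∀ i, IsPrimeInt (r i)) ∧ r 0 = p ∧ r (Fin.last n) = q ∧
        ∀ i : Fin n, PPersp (r i.castSucc) (r i.succ) := by
  constructor
  · intro h
    have hcol : (goodCon p).rel p.1 p.2 := by
      show Good p (p.1 ⊓ p.2) (p.1 ⊔ p.2)
      rw [inf_eq_left.mpr hp.le, sup_eq_right.mpr hp.le]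
      exact Relation.ReflTransGen.single ⟨hp, Relation.ReflTransGen.refl⟩
    have hq2 : (goodCon p).rel q.1 q.2 := h (goodCon p) hcol
    have hgood : Good p q.1 q.2 := by
      have h' : Good p (q.1 ⊓ q.2) (q.1 ⊔ q.2) := hq2
      rwa [inf_eq_left.mpr hq.le, sup_eq_right.mpr hq.le] at h'
    rcases Relation.ReflTransGen.cases_head hgood with heq | ⟨z, ⟨hcovz, hreach⟩, hz⟩
    · exact absurd heq hq.lt.ne
    · have hzq : z = q.2 := by
        rcases hq.eq_or_eq hcovz.le (Good.le hz) with h1 | h1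
        · exact absurd h1 hcovz.lt.ne'
        · exact h1
      subst hzq
      have hreach' : Relation.ReflTransGen PStep p q := hreach
      obtain ⟨n, f, hch⟩ := nchain_of_reach hp hreach'
      obtain ⟨m, g, ⟨h0, hm, hpr, hst⟩, hinj⟩ := nchain_inj n f hch
      refine ⟨m, fun k => g (k : ℕ), ?_, ?_, ?_, ?_, ?_⟩
      · intro a b hab
        exact Fin.ext (hinj _ _ (Nat.lt_succ_iff.mp a.isLt) (Nat.lt_succ_iff.mp b.isLt) hab)
      · intro k
        exact hpr _ (Nat.lt_succ_iff.mp k.isLt)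
      · simpa using h0
      · simpa using hm
      · intro k
        simpa using hst (k : ℕ) k.isLt
  · rintro ⟨n, r, hinj, hpr, h0, hl, hstep⟩
    intro θ hθ
    have key : ∀ i : Fin (n + 1), θ.rel (r i).1 (r i).2 := by
      intro i
      induction i using Fin.induction with
      | zero => rw [h0]; exact hθ
      | succ i ihi => exact collapse_step ihi (hpr _) (hstep i)
    have := key (Fin.last n)
    rwa [hl] at this
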